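/- Let n be odd and a ∈ F_{2^n} nonzero, and let h(x) = x + a⁻¹·Tr(a³x³). Then h(x) = h(y) if and only if x = y or x + y = a⁻¹. -/
import Mathlib

theorem stmt_17 {n : ℕ} (hn : Odd n) (F : Type*) [Field F] [Fintype F]
    [Algebra (ZMod 2) F] (hcard : Fintype.card F = 2 ^ n)
    (a : F) (ha : a ≠ 0)
    (h : F → F)
    (hh : ∀ x, h x = x + a⁻¹ * algebraMap (ZMod 2) F (Algebra.trace (ZMod 2) F (a ^ 3 * x ^ 3)))
    (x y : F) :
    h x = h y ↔ x = y ∨ x + y = a⁻¹ := by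
  have hinj : Function.Injective (algebraMap (ZMod 2) F) :=
    (algebraMap (ZMod 2) F).injective
  haveI : CharP F 2 := charP_of_injective_algebraMap hinj 2
  haveI : ExpChar F 2 := ExpChar.prime Nat.prime_two
  -- Frobenius as an algebra equivalence over ZMod 2
  let e : F ≃ₐ[ZMod 2] F :=
    { frobeniusEquiv F 2 with
      commutes' := fun c => by
        show frobenius F 2 (algebraMap (ZMod 2) F c) = algebraMap (ZMod 2) F c
        rw [frobenius_def, ← map_pow]
        congr 1
        revert c; decide }
  have htr_sq : ∀ u : F, Algebra.trace (ZMod 2) F (u ^ 2) = Algebra.trace (ZMod 2) F u := by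
    intro u
    have := Algebra.trace_eq_of_algEquiv e u
    simpa [e, frobenius_def] using this
  -- trace of 1 is 1
  have hfinrank : Module.finrank (ZMod 2) F = n := by
    have hc := Module.card_eq_pow_finrank (K := ZMod 2) (V := F)
    rw [ZMod.card, hcard] at hc
    exact (Nat.pow_right_injective le_rfl hc.symm)
  have htr1 : Algebra.trace (ZMod 2) F (1 : F) = 1 := by
    have h1 : (1 : F) = algebraMap (ZMod 2) F 1 := by simp
    rw [h1, Algebra.trace_algebraMap, hfinrank]
    obtain ⟨k, hk⟩ := hn
    subst hk
    rw [nsmul_eq_mul, mul_one]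
    push_cast
    rw [show ((2 : ZMod 2)) = 0 from by decide]
    ring
  have two : (2 : F) = 0 := by
    have := CharP.cast_eq_zero F 2; exact_mod_cast this
  have key : Algebra.trace (ZMod 2) F (a ^ 3 * x ^ 3)
      + Algebra.trace (ZMod 2) F (a ^ 3 * (x + a⁻¹) ^ 3) = 1 := by
    have hexp : a ^ 3 * (x + a⁻¹) ^ 3
        = a ^ 3 * x ^ 3 + ((a * x) ^ 2 + ((a * x) + 1))
          + 2 * ((a * x) ^ 2 + a * x) := by
      field_simp
      ring
    rw [hexp, two, zero_mul, add_zero, map_add, map_add, map_add, htr_sq, htr1]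
    ring_nf
    generalize Algebra.trace (ZMod 2) F (a ^ 3 * x ^ 3) = t
    generalize Algebra.trace (ZMod 2) F (a * x) = s
    revert t s; decide
  constructor
  · intro he
    rw [hh, hh] at he
    set tx := Algebra.trace (ZMod 2) F (a ^ 3 * x ^ 3) with htx
    set ty := Algebra.trace (ZMod 2) F (a ^ 3 * y ^ 3) with hty
    have hd : x - y = a⁻¹ * (algebraMap (ZMod 2) F (ty - tx)) := by
      rw [map_sub]; linear_combination he
    rcases (by decide : ∀ c : ZMod 2, c = 0 ∨ c = 1) (ty - tx) with h0 | h1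
    · left
      rw [h0, map_zero, mul_zero, sub_eq_zero] at hd
      exact hd
    · right
      rw [h1, map_one, mul_one, sub_eq_iff_eq_add] at hd
      rw [hd]
      linear_combination y * two
  · rintro (rfl | hxy)
    · rfl
    · have hy : y = x + a⁻¹ := by linear_combination hxy - x * two
      subst hy
      rw [hh, hh]
      have hty : Algebra.trace (ZMod 2) F (a ^ 3 * (x + a⁻¹) ^ 3)
          = 1 - Algebra.trace (ZMod 2) F (a ^ 3 * x ^ 3) := by
        linear_combination key
      rw [hty, map_sub, map_one]
      have : a⁻¹ ≠ 0 := inv_ne_zero ha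
      linear_combination (algebraMap (ZMod 2) F (Algebra.trace (ZMod 2) F (a ^ 3 * x ^ 3)) - 1) * a⁻¹ * two
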